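/- For every β, γ > 0 and every continuous φ : ℝ³ → ℝ satisfying |φ(v)| ≤ C(1 + |v|²) for some C > 0, one has L_β φ(v) = 0 for all v ∈ ℝ³ if and only if φ is constant; i.e., the kernel of the linear Boltzmann operator L_β consists exactly of the constant functions. -/

import Mathlib

open MeasureTheory Real

noncomputable section

abbrev R3 : Type := EuclideanSpace ℝ (Fin 3)

abbrev S2 : Type := Metric.sphere (0 : R3) 1

/-- Euclidean inner product on ℝ³. -/
noncomputable def dotp (x y : R3) : ℝ := inner ℝ x y

/-- The surface measure on the unit sphere `S² ⊂ ℝ³`. -/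
noncomputable def sphMeasure : Measure S2 := (volume : Measure R3).toSphere

/-- Lebesgue measure ⊗ surface measure on `ℝ³ × S²`. -/
noncomputable def prodMeas : Measure (R3 × S2) := (volume : Measure R3).prod sphMeasure

/-- The Maxwellian `M_β(v) = (β/(2π))^{3/2} exp(-β|v|²/2)`. -/
noncomputable def Mb (β : ℝ) (v : R3) : ℝ :=
  (β / (2 * π)) ^ ((3 : ℝ) / 2) * exp (-β * ‖v‖ ^ 2 / 2)

/-- Post-collision velocity `v' = v - ((v - v⋆)·n) n`. -/
noncomputable def vPost (v w : R3) (n : S2) : R3 := v - dotp (v - w) (n : R3) • (n : R3)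

/-- Post-collision velocity `v⋆' = v⋆ + ((v - v⋆)·n) n`. -/
noncomputable def wPost (v w : R3) (n : S2) : R3 := w + dotp (v - w) (n : R3) • (n : R3)

/-- The hard-sphere collision kernel `((v - v⋆)·n)₊`. -/
noncomputable def collKer (v w : R3) (n : S2) : ℝ := max (dotp (v - w) (n : R3)) 0

/-- The integrand of the linear Boltzmann operator `L_β φ(v)`. -/
noncomputable def LbInt (β : ℝ) (φ : R3 → ℝ) (v : R3) : R3 × S2 → ℝ :=
  fun p => (φ v - φ (vPost v p.1 p.2)) * Mb β p.1 * collKer v p.1 p.2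

/-- The linear Boltzmann operator
`L_β φ(v) = γ ∫ (φ(v) - φ(v - ((v-v⋆)·n) n)) M_β(v⋆) ((v-v⋆)·n)₊ dv⋆ dn`. -/
noncomputable def Lb (β γ : ℝ) (φ : R3 → ℝ) (v : R3) : ℝ := γ * ∫ p, LbInt β φ v p ∂prodMeas

lemma norm_S2 (n : S2) : ‖(n : R3)‖ = 1 := by
  have := n.2
  simpa [Metric.mem_sphere, dist_eq_norm] using this

lemma inner_nn (n : S2) : (inner ℝ (n:R3) (n:R3) : ℝ) = 1 := by
  rw [real_inner_self_eq_norm_sq, norm_S2]; norm_num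

lemma dotp_post (v w : R3) (n : S2) :
    dotp (vPost v w n - wPost v w n) (n : R3) = - dotp (v - w) (n : R3) := by
  simp only [vPost, wPost, dotp]
  rw [show v - (inner ℝ (v - w) (n:R3) : ℝ) • (n:R3) - (w + (inner ℝ (v - w) (n:R3) : ℝ) • (n:R3))
      = (v - w) - (2 * (inner ℝ (v - w) (n:R3) : ℝ)) • (n:R3) by module]
  rw [inner_sub_left, real_inner_smul_left, inner_nn]
  ring

lemma vPost_invol (v w : R3) (n : S2) :
    vPost (vPost v w n) (wPost v w n) n = v := by
  have h := dotp_post v w n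
  conv_lhs => rw [vPost, h]
  simp only [vPost, wPost]
  module

lemma energy (v w : R3) (n : S2) :
    ‖vPost v w n‖ ^ 2 + ‖wPost v w n‖ ^ 2 = ‖v‖ ^ 2 + ‖w‖ ^ 2 := by
  simp only [vPost, wPost, dotp]
  rw [norm_sub_sq_real, norm_add_sq_real, real_inner_smul_right, real_inner_smul_right,
    norm_smul, inner_sub_left]
  simp [norm_S2, mul_pow, sq_abs]
  ring

lemma vPost_neg (v w : R3) (n : S2) : vPost v w (-n) = vPost v w n := by
  simp only [vPost, dotp, coe_neg_sphere, inner_neg_right, neg_smul, smul_neg]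
  simp

lemma collKer_neg (v w : R3) (n : S2) : collKer w v (-n) = collKer v w n := by
  simp only [collKer, dotp, coe_neg_sphere, inner_neg_right]
  rw [show w - v = -(v - w) by abel, inner_neg_left]
  simp

lemma Mb_pos {β : ℝ} (hβ : 0 < β) (v : R3) : 0 < Mb β v := by
  unfold Mb
  positivity

lemma Mb_energy {β : ℝ} (v w : R3) (n : S2) :
    Mb β (vPost v w n) * Mb β (wPost v w n) = Mb β v * Mb β w := by
  unfold Mb
  rw [mul_mul_mul_comm, ← exp_add, mul_mul_mul_comm (_ ^ _), ← exp_add]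
  congr 2
  have h := energy v w n
  field_simp
  linear_combination (-β) * h

noncomputable def Tcol (n : S2) : R3 × R3 → R3 × R3 :=
  fun p => (vPost p.1 p.2 n, wPost p.1 p.2 n)

lemma Tcol_invol (n : S2) : Function.Involutive (Tcol n) := by
  intro p
  have h1 := vPost_invol p.1 p.2 n
  have h2 : wPost (vPost p.1 p.2 n) (wPost p.1 p.2 n) n = p.2 := by
    have h := dotp_post p.1 p.2 n
    conv_lhs => rw [wPost, h]
    simp only [vPost, wPost]
    module
  simp [Tcol, h1, h2]

noncomputable def TcolLin (n : S2) : (R3 × R3) →ₗ[ℝ] (R3 × R3) where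
  toFun := Tcol n
  map_add' p q := by
    simp only [Tcol, vPost, wPost, dotp, Prod.fst_add, Prod.snd_add, Prod.mk_add_mk, Prod.mk.injEq]
    constructor <;>
    · rw [show p.1 + q.1 - (p.2 + q.2) = (p.1 - p.2) + (q.1 - q.2) by abel, inner_add_left]
      module
  map_smul' c p := by
    simp only [Tcol, vPost, wPost, dotp, Prod.smul_fst, Prod.smul_snd, Prod.smul_mk,
      RingHom.id_apply, Prod.mk.injEq]
    constructor <;>
    · rw [show c • p.1 - c • p.2 = c • (p.1 - p.2) by module, real_inner_smul_left]
      module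

lemma Tcol_continuous (n : S2) : Continuous (Tcol n) := by
  unfold Tcol vPost wPost dotp
  have h1 : Continuous fun p : R3 × R3 => (inner ℝ (p.1 - p.2) ((n : R3)) : ℝ) :=
    (continuous_fst.sub continuous_snd).inner continuous_const
  exact (continuous_fst.sub (h1.smul continuous_const)).prodMk
    (continuous_snd.add (h1.smul continuous_const))

lemma Tcol_measurePreserving (n : S2) :
    MeasurePreserving (Tcol n) ((volume : Measure R3).prod volume)
      ((volume : Measure R3).prod volume) := by
  have hdet : |(LinearMap.det (TcolLin n))⁻¹| = 1 := by
    have hcomp : (TcolLin n) ∘ₗ (TcolLin n) = LinearMap.id := by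
      apply LinearMap.ext
      intro p
      exact Tcol_invol n p
    have : LinearMap.det (TcolLin n) * LinearMap.det (TcolLin n) = 1 := by
      rw [← LinearMap.det_comp, hcomp, LinearMap.det_id]
    rcases mul_self_eq_one_iff.1 this with h | h <;> simp [h] <;> norm_num
  have hdetne : LinearMap.det (TcolLin n) ≠ 0 := by
    intro h
    rw [h] at hdet
    norm_num at hdet
  haveI : ((volume : Measure R3).prod volume).IsAddHaarMeasure :=
    Measure.prod.instIsAddHaarMeasure (volume : Measure R3) (volume : Measure R3)
  constructor
  · exact (Tcol_continuous n).measurable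
  · have := Measure.map_linearMap_addHaar_eq_smul_addHaar
      ((volume : Measure R3).prod volume) hdetne
    rw [show ((TcolLin n : (R3 × R3) →ₗ[ℝ] R3 × R3) : R3 × R3 → R3 × R3) = Tcol n from rfl]
      at this
    rw [this, hdet]
    simp

noncomputable def TcolEquiv (n : S2) : (R3 × R3) ≃ᵐ (R3 × R3) where
  toEquiv := (Tcol_invol n).toPerm
  measurable_toFun := (Tcol_continuous n).measurable
  measurable_invFun := (Tcol_continuous n).measurable


open scoped Pointwise in
lemma coe_image_neg_preimage (s : Set S2) :
    (((↑) : S2 → R3) '' ((fun n : S2 => -n) ⁻¹' s)) = -(((↑) : S2 → R3) '' s) := by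
  ext y
  simp only [Set.mem_image, Set.mem_preimage, Set.mem_neg]
  constructor
  · rintro ⟨x, hx, rfl⟩
    exact ⟨-x, hx, by simp [coe_neg_sphere]⟩
  · rintro ⟨x, hx, hxy⟩
    refine ⟨-x, by simpa using hx, ?_⟩
    rw [coe_neg_sphere, hxy]
    simp

lemma sph_neg_continuous : Continuous (fun n : S2 => -n) := by
  rw [show (fun n : S2 => -n) = fun n : S2 => (⟨-(n : R3), by
      simp [Metric.mem_sphere, dist_eq_norm, norm_S2]⟩ : S2) from rfl]
  exact Continuous.subtype_mk (continuous_subtype_val.neg) _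

open scoped Pointwise in
lemma sph_neg_measurePreserving :
    MeasurePreserving (fun n : S2 => -n) sphMeasure sphMeasure := by
  refine ⟨sph_neg_continuous.measurable, ?_⟩
  apply Measure.ext fun s hs => ?_
  have hpre : MeasurableSet ((fun n : S2 => -n) ⁻¹' s) := sph_neg_continuous.measurable hs
  rw [Measure.map_apply sph_neg_continuous.measurable hs, sphMeasure,
    Measure.toSphere_apply' _ hpre, Measure.toSphere_apply' _ hs,
    coe_image_neg_preimage, Set.smul_neg]
  congr 1
  exact Measure.measure_neg volume _

open scoped Pointwise in
instance sphMeasure_openPos : sphMeasure.IsOpenPosMeasure := by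
  constructor
  intro U hU hne
  rw [sphMeasure, Measure.toSphere_apply' _ hU.measurableSet]
  obtain ⟨V, hVopen, hVU⟩ := isOpen_induced_iff.1 hU
  have himg : ((↑) : S2 → R3) '' U = Metric.sphere (0:R3) 1 ∩ V := by
    rw [← hVU]; exact Subtype.image_preimage_coe _ _
  set A : Set R3 := {y | y ∈ Metric.ball (0:R3) 1 ∧ y ∈ ({0}ᶜ : Set R3) ∧ ‖y‖⁻¹ • y ∈ V}
    with hA
  have hAopen : IsOpen A := by
    have hN : ContinuousOn (fun y : R3 => ‖y‖⁻¹ • y) ({0}ᶜ : Set R3) := by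
      apply ContinuousOn.fun_smul
      · exact (continuousOn_of_forall_continuousAt fun y hy =>
          ((continuous_norm.continuousAt).inv₀ (by simpa using hy)))
      · exact continuousOn_id
    have h1 : IsOpen (({0}ᶜ : Set R3) ∩ (fun y : R3 => ‖y‖⁻¹ • y) ⁻¹' V) :=
      hN.isOpen_inter_preimage isOpen_compl_singleton hVopen
    have : A = Metric.ball (0:R3) 1 ∩ (({0}ᶜ : Set R3) ∩ (fun y : R3 => ‖y‖⁻¹ • y) ⁻¹' V) := by
      ext y; simp [hA, and_assoc]
    rw [this]
    exact Metric.isOpen_ball.inter h1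
  have hAsub : A ⊆ Set.Ioo (0:ℝ) 1 • (((↑) : S2 → R3) '' U) := by
    rintro y ⟨hy1, hy2, hy3⟩
    have hy0 : y ≠ 0 := hy2
    have hny : 0 < ‖y‖ := norm_pos_iff.2 hy0
    refine Set.mem_smul.2 ⟨‖y‖, ?_, ‖y‖⁻¹ • y, ?_, ?_⟩
    · exact ⟨hny, by simpa [dist_eq_norm] using hy1⟩
    · rw [himg]
      refine ⟨?_, hy3⟩
      simp [norm_smul, abs_of_nonneg, inv_mul_cancel₀ hny.ne']
    · simp [smul_smul, mul_inv_cancel₀ hny.ne']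
  have hAne : A.Nonempty := by
    obtain ⟨x, hx⟩ := hne
    refine ⟨(2⁻¹ : ℝ) • (x : R3), ?_, ?_, ?_⟩
    · simp [mem_ball_iff_norm, norm_smul, norm_S2]
      norm_num
    · simp only [Set.mem_compl_iff, Set.mem_singleton_iff]
      intro h
      have : ‖(2⁻¹ : ℝ) • (x : R3)‖ = 0 := by rw [h]; simp
      rw [norm_smul, norm_S2] at this
      norm_num at this
    · have hxV : (x : R3) ∈ V := by rw [← hVU] at hx; exact hx
      have : ‖(2⁻¹ : ℝ) • (x : R3)‖ = 2⁻¹ := by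
        rw [norm_smul, norm_S2]; norm_num
      rw [this]
      norm_num
      rw [smul_smul]
      norm_num
      exact hxV
  have hpos : volume (Set.Ioo (0:ℝ) 1 • (((↑) : S2 → R3) '' U)) ≠ 0 := by
    intro h
    exact hAopen.measure_ne_zero volume hAne (measure_mono_null hAsub h)
  simp only [ne_eq, mul_eq_zero, not_or]
  refine ⟨by norm_num, hpos⟩

lemma gauss_integrable {b : ℝ} (hb : 0 < b) :
    Integrable (fun v : R3 => exp (-b * ‖v‖ ^ 2)) := by
  have h := (GaussianFourier.integrable_cexp_neg_mul_sq_norm_add_of_euclideanSpace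
    (ι := Fin 3) (b := (b : ℂ)) (by simpa using hb) 0 (0 : EuclideanSpace ℝ (Fin 3))).norm
  apply h.congr
  filter_upwards with v
  simp [Complex.norm_exp]
  left
  norm_cast

lemma Mb_continuous (β : ℝ) : Continuous (Mb β) := by
  unfold Mb
  exact continuous_const.mul (Real.continuous_exp.comp (by fun_prop))

noncomputable def PhiB (β : ℝ) (v : R3) : ℝ := (1 + ‖v‖) ^ 5 * Mb β v

lemma PhiB_nonneg {β : ℝ} (hβ : 0 < β) (v : R3) : 0 ≤ PhiB β v := by
  have := Mb_pos hβ v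
  unfold PhiB
  positivity

lemma PhiB_continuous (β : ℝ) : Continuous (PhiB β) :=
  (((continuous_const.add continuous_norm).pow 5)).mul (Mb_continuous β)

lemma PhiB_integrable {β : ℝ} (hβ : 0 < β) : Integrable (PhiB β) := by
  set cβ : ℝ := (β / (2 * π)) ^ ((3 : ℝ) / 2) with hcβ
  have hcβ0 : 0 ≤ cβ := by positivity
  have hb4 : 0 < β / 4 := by linarith
  apply Integrable.mono' ((gauss_integrable hb4).const_mul (cβ * exp (25 / β)))
    (PhiB_continuous β).aestronglyMeasurable
  filter_upwards with v
  have hx : 0 ≤ ‖v‖ := norm_nonneg v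
  set x := ‖v‖
  rw [Real.norm_eq_abs, abs_of_nonneg (PhiB_nonneg hβ v)]
  unfold PhiB Mb
  have h1 : (1 + x) ^ 5 ≤ exp (5 * x) := by
    have : (1 + x) ^ 5 ≤ exp x ^ 5 :=
      pow_le_pow_left₀ (by linarith) (by linarith [add_one_le_exp x]) 5
    rwa [← exp_nat_mul, show ((5:ℕ):ℝ) = 5 by norm_num] at this
  calc (1 + x) ^ 5 * (cβ * exp (-β * x ^ 2 / 2))
      ≤ exp (5 * x) * (cβ * exp (-β * x ^ 2 / 2)) := by
        apply mul_le_mul_of_nonneg_right h1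
        positivity
    _ = cβ * exp (5 * x + -β * x ^ 2 / 2) := by rw [exp_add]; ring
    _ ≤ cβ * exp (25 / β + -(β / 4) * x ^ 2) := by
        apply mul_le_mul_of_nonneg_left _ hcβ0
        apply exp_le_exp.2
        have h4 : β * (5 * x + -β * x ^ 2 / 2) ≤ β * (25 / β + -(β / 4) * x ^ 2) := by
          have hfield : β * (25 / β) = 25 := by field_simp
          rw [mul_add, mul_add, hfield]
          nlinarith [sq_nonneg (β * x - 10)]
        exact le_of_mul_le_mul_left h4 hβ
    _ = cβ * exp (25 / β) * exp (-(β / 4) * x ^ 2) := by rw [exp_add]; ring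


noncomputable abbrev mMeas : Measure ((R3 × R3) × S2) :=
  ((volume : Measure R3).prod volume).prod sphMeasure

instance : IsFiniteMeasure sphMeasure := by unfold sphMeasure; infer_instance

instance : SFinite prodMeas := by unfold prodMeas; infer_instance

instance : SigmaFinite prodMeas := by unfold prodMeas; infer_instance

lemma master_integrable {β : ℝ} (hβ : 0 < β) :
    Integrable (fun q : (R3 × R3) × S2 => PhiB β q.1.1 * PhiB β q.1.2) mMeas := by
  have h2 : Integrable (fun p : R3 × R3 => PhiB β p.1 * PhiB β p.2)
      ((volume : Measure R3).prod volume) :=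
    (PhiB_integrable hβ).mul_prod (PhiB_integrable hβ)
  have h3 := h2.mul_prod (integrable_const (1 : ℝ) (μ := sphMeasure))
  unfold mMeas
  simpa using h3

lemma integrable_dom {β : ℝ} (hβ : 0 < β) {K : ℝ} {f : (R3 × R3) × S2 → ℝ}
    (hf : Continuous f) (h : ∀ q, |f q| ≤ K * (PhiB β q.1.1 * PhiB β q.1.2)) :
    Integrable f mMeas := by
  apply Integrable.mono' ((master_integrable hβ).const_mul K) hf.aestronglyMeasurable
  filter_upwards with q
  simpa [Real.norm_eq_abs] using h q

lemma assoc_measurePreserving :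
    MeasurePreserving (MeasurableEquiv.prodAssoc : (R3 × R3) × S2 ≃ᵐ R3 × (R3 × S2))
      mMeas ((volume : Measure R3).prod prodMeas) :=
  measurePreserving_prodAssoc _ _ _

lemma integral_assoc (f : R3 × (R3 × S2) → ℝ) :
    ∫ p, f p ∂((volume : Measure R3).prod prodMeas)
      = ∫ q, f (MeasurableEquiv.prodAssoc q) ∂mMeas :=
  (assoc_measurePreserving.integral_comp' f).symm

lemma integrable_assoc {f : R3 × (R3 × S2) → ℝ}
    (h : Integrable (fun q => f (MeasurableEquiv.prodAssoc q)) mMeas) :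
    Integrable f ((volume : Measure R3).prod prodMeas) :=
  (assoc_measurePreserving.integrable_comp_emb
    (MeasurableEquiv.measurableEmbedding _)).1 h


-- core integrands
noncomputable def Wf (β : ℝ) (φ : R3 → ℝ) : (R3 × R3) × S2 → ℝ := fun q =>
  (φ q.1.1 - φ (vPost q.1.1 q.1.2 q.2)) * φ q.1.1
    * (Mb β q.1.1 * Mb β q.1.2 * collKer q.1.1 q.1.2 q.2)

noncomputable def W2f (β : ℝ) (φ : R3 → ℝ) : (R3 × R3) × S2 → ℝ := fun q =>
  (φ (vPost q.1.1 q.1.2 q.2) - φ q.1.1) * φ (vPost q.1.1 q.1.2 q.2)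
    * (Mb β q.1.1 * Mb β q.1.2 * collKer q.1.2 q.1.1 q.2)

noncomputable def W3f (β : ℝ) (φ : R3 → ℝ) : (R3 × R3) × S2 → ℝ := fun q =>
  (φ (vPost q.1.1 q.1.2 q.2) - φ q.1.1) * φ (vPost q.1.1 q.1.2 q.2)
    * (Mb β q.1.1 * Mb β q.1.2 * collKer q.1.1 q.1.2 q.2)

noncomputable def Jf (β : ℝ) (φ : R3 → ℝ) : (R3 × R3) × S2 → ℝ := fun q =>
  (φ q.1.1 - φ (vPost q.1.1 q.1.2 q.2)) ^ 2
    * (Mb β q.1.1 * Mb β q.1.2 * collKer q.1.1 q.1.2 q.2)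

lemma dotp_swap (v w : R3) (n : S2) : dotp (w - v) (n : R3) = - dotp (v - w) (n : R3) := by
  unfold dotp
  rw [show w - v = -(v - w) by abel, inner_neg_left]

lemma collKer_post (v w : R3) (n : S2) :
    collKer (vPost v w n) (wPost v w n) n = collKer w v n := by
  unfold collKer
  rw [dotp_post, ← dotp_swap]

lemma wPost_invol (v w : R3) (n : S2) :
    wPost (vPost v w n) (wPost v w n) n = w := by
  have h := dotp_post v w n
  conv_lhs => rw [wPost, h]
  simp only [vPost, wPost]
  module

lemma Wf_T {β : ℝ} (φ : R3 → ℝ) (n : S2) (p : R3 × R3) :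
    Wf β φ (Tcol n p, n) = W2f β φ (p, n) := by
  unfold Wf W2f Tcol
  simp only
  rw [vPost_invol, Mb_energy, collKer_post]

lemma W2f_neg {β : ℝ} (φ : R3 → ℝ) (n : S2) (p : R3 × R3) :
    W2f β φ (p, -n) = W3f β φ (p, n) := by
  unfold W2f W3f
  simp only
  rw [vPost_neg, collKer_neg]

lemma Wf_add_W3f {β : ℝ} (φ : R3 → ℝ) (q : (R3 × R3) × S2) :
    Wf β φ q + W3f β φ q = Jf β φ q := by
  unfold Wf W3f Jf
  ring

-- continuity
lemma vPost_continuous : Continuous (fun q : (R3 × R3) × S2 => vPost q.1.1 q.1.2 q.2) := by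
  unfold vPost dotp
  have h1 : Continuous fun q : (R3 × R3) × S2 => (inner ℝ (q.1.1 - q.1.2) ((q.2 : R3)) : ℝ) :=
    ((continuous_fst.fst.sub continuous_fst.snd).inner
      (continuous_subtype_val.comp continuous_snd))
  exact continuous_fst.fst.sub (h1.smul (continuous_subtype_val.comp continuous_snd))

lemma collKer_continuous : Continuous (fun q : (R3 × R3) × S2 => collKer q.1.1 q.1.2 q.2) := by
  unfold collKer dotp
  exact (((continuous_fst.fst.sub continuous_fst.snd).inner
    (continuous_subtype_val.comp continuous_snd))).max continuous_const

lemma collKer_continuous' : Continuous (fun q : (R3 × R3) × S2 => collKer q.1.2 q.1.1 q.2) := by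
  unfold collKer dotp
  exact (((continuous_fst.snd.sub continuous_fst.fst).inner
    (continuous_subtype_val.comp continuous_snd))).max continuous_const

lemma MbMb_continuous (β : ℝ) :
    Continuous (fun q : (R3 × R3) × S2 => Mb β q.1.1 * Mb β q.1.2) :=
  ((Mb_continuous β).comp continuous_fst.fst).mul ((Mb_continuous β).comp continuous_fst.snd)

-- bounds
lemma collKer_nonneg (v w : R3) (n : S2) : 0 ≤ collKer v w n := le_max_right _ _

lemma collKer_le (v w : R3) (n : S2) : collKer v w n ≤ (1 + ‖v‖) * (1 + ‖w‖) := by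
  unfold collKer
  rw [max_le_iff]
  constructor
  · calc dotp (v - w) (n : R3) ≤ |dotp (v - w) (n : R3)| := le_abs_self _
      _ ≤ ‖v - w‖ * ‖(n : R3)‖ := abs_real_inner_le_norm _ _
      _ = ‖v - w‖ := by rw [norm_S2, mul_one]
      _ ≤ ‖v‖ + ‖w‖ := norm_sub_le _ _
      _ ≤ (1 + ‖v‖) * (1 + ‖w‖) := by nlinarith [norm_nonneg v, norm_nonneg w]
  · positivity

lemma norm_vPost_le (v w : R3) (n : S2) : ‖vPost v w n‖ ≤ 2 * ‖v‖ + ‖w‖ := by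
  unfold vPost
  calc ‖v - dotp (v - w) (n:R3) • (n:R3)‖ ≤ ‖v‖ + ‖dotp (v - w) (n:R3) • (n:R3)‖ :=
        norm_sub_le _ _
    _ = ‖v‖ + |dotp (v - w) (n:R3)| := by rw [norm_smul, norm_S2, mul_one, Real.norm_eq_abs]
    _ ≤ ‖v‖ + ‖v - w‖ * ‖(n:R3)‖ := by
        have := abs_real_inner_le_norm (v - w) (n : R3)
        unfold dotp; linarith
    _ ≤ 2 * ‖v‖ + ‖w‖ := by
        rw [norm_S2, mul_one]
        have := norm_sub_le v w
        linarith

section PhiBounds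

variable {φ : R3 → ℝ} {C : ℝ}

lemma abs_phi_le (hC : 0 < C) (hφb : ∀ v, |φ v| ≤ C * (1 + ‖v‖ ^ 2)) (v : R3) :
    |φ v| ≤ C * (1 + ‖v‖) ^ 2 := by
  refine (hφb v).trans ?_
  have := norm_nonneg v
  nlinarith

lemma abs_phi_post_le (hC : 0 < C) (hφb : ∀ v, |φ v| ≤ C * (1 + ‖v‖ ^ 2))
    (v w : R3) (n : S2) :
    |φ (vPost v w n)| ≤ 4 * C * ((1 + ‖v‖) ^ 2 * (1 + ‖w‖) ^ 2) := by
  refine (hφb _).trans ?_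
  have h := norm_vPost_le v w n
  have h0 := norm_nonneg (vPost v w n)
  have h1 := norm_nonneg v
  have h2 := norm_nonneg w
  have ha : ‖vPost v w n‖ ^ 2 ≤ (2 * ‖v‖ + ‖w‖) ^ 2 := by nlinarith
  have hb : 1 + (2 * ‖v‖ + ‖w‖) ^ 2 ≤ (1 + 2 * ‖v‖ + ‖w‖) ^ 2 := by nlinarith
  have hd : (1 + 2 * ‖v‖ + ‖w‖) ≤ 2 * ((1 + ‖v‖) * (1 + ‖w‖)) := by nlinarith
  have he : (1 + 2 * ‖v‖ + ‖w‖) ^ 2 ≤ (2 * ((1 + ‖v‖) * (1 + ‖w‖))) ^ 2 := by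
    apply pow_le_pow_left₀ (by linarith) hd
  have hf : 1 + ‖vPost v w n‖ ^ 2 ≤ 4 * ((1 + ‖v‖) ^ 2 * (1 + ‖w‖) ^ 2) := by nlinarith
  calc C * (1 + ‖vPost v w n‖ ^ 2) ≤ C * (4 * ((1 + ‖v‖) ^ 2 * (1 + ‖w‖) ^ 2)) :=
        mul_le_mul_of_nonneg_left hf hC.le
    _ = 4 * C * ((1 + ‖v‖) ^ 2 * (1 + ‖w‖) ^ 2) := by ring

lemma abs_phi_diff_le (hC : 0 < C) (hφb : ∀ v, |φ v| ≤ C * (1 + ‖v‖ ^ 2))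
    (v w : R3) (n : S2) :
    |φ v - φ (vPost v w n)| ≤ 5 * C * ((1 + ‖v‖) ^ 2 * (1 + ‖w‖) ^ 2) := by
  have h1 := abs_phi_le hC hφb v
  have h2 := abs_phi_post_le hC hφb v w n
  have h3 : (1:ℝ) ≤ (1 + ‖w‖) ^ 2 := by nlinarith [norm_nonneg w]
  have h4 : (0:ℝ) ≤ (1 + ‖v‖) ^ 2 := by positivity
  calc |φ v - φ (vPost v w n)| ≤ |φ v| + |φ (vPost v w n)| := abs_sub _ _
    _ ≤ C * (1 + ‖v‖) ^ 2 + 4 * C * ((1 + ‖v‖) ^ 2 * (1 + ‖w‖) ^ 2) := by linarith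
    _ ≤ 5 * C * ((1 + ‖v‖) ^ 2 * (1 + ‖w‖) ^ 2) := by
        nlinarith [mul_le_mul_of_nonneg_left h3 (mul_nonneg hC.le h4)]

lemma Wf_bound {β : ℝ} (hβ : 0 < β) (hC : 0 < C)
    (hφb : ∀ v, |φ v| ≤ C * (1 + ‖v‖ ^ 2)) (q : (R3 × R3) × S2) :
    |Wf β φ q| ≤ 25 * C ^ 2 * (PhiB β q.1.1 * PhiB β q.1.2) := by
  obtain ⟨⟨v, w⟩, n⟩ := q
  have hMv := (Mb_pos hβ v).le
  have hMw := (Mb_pos hβ w).le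
  have hk := collKer_nonneg v w n
  unfold Wf
  simp only
  rw [abs_mul, abs_mul, abs_of_nonneg (by positivity : 0 ≤ Mb β v * Mb β w * collKer v w n)]
  have e1 : |φ v - φ (vPost v w n)| * |φ v|
      ≤ (5 * C * ((1 + ‖v‖) ^ 2 * (1 + ‖w‖) ^ 2)) * (C * (1 + ‖v‖) ^ 2) :=
    mul_le_mul (abs_phi_diff_le hC hφb v w n) (abs_phi_le hC hφb v) (abs_nonneg _)
      (by positivity)
  have e2 : Mb β v * Mb β w * collKer v w n
      ≤ Mb β v * Mb β w * ((1 + ‖v‖) * (1 + ‖w‖)) :=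
    mul_le_mul_of_nonneg_left (collKer_le v w n) (by positivity)
  calc |φ v - φ (vPost v w n)| * |φ v| * (Mb β v * Mb β w * collKer v w n)
      ≤ (5 * C * ((1 + ‖v‖) ^ 2 * (1 + ‖w‖) ^ 2)) * (C * (1 + ‖v‖) ^ 2)
        * (Mb β v * Mb β w * ((1 + ‖v‖) * (1 + ‖w‖))) :=
        mul_le_mul e1 e2 (by positivity) (by positivity)
    _ = 5 * C ^ 2 * ((1 + ‖v‖) ^ 5 * Mb β v * ((1 + ‖w‖) ^ 3 * Mb β w)) := by ring
    _ ≤ 25 * C ^ 2 * (PhiB β v * PhiB β w) := by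
        unfold PhiB
        have h3 : (1 + ‖w‖) ^ 3 ≤ (1 + ‖w‖) ^ 5 :=
          pow_le_pow_right₀ (by linarith [norm_nonneg w]) (by norm_num)
        have h5 : (0:ℝ) ≤ (1 + ‖v‖) ^ 5 * Mb β v := by positivity
        nlinarith [mul_le_mul_of_nonneg_left (mul_le_mul_of_nonneg_right h3 hMw) h5,
          mul_nonneg h5 (mul_nonneg (by positivity : (0:ℝ) ≤ (1 + ‖w‖) ^ 5) hMw), sq_nonneg C]
end PhiBounds

section MoreBounds

variable {φ : R3 → ℝ} {C : ℝ}

lemma W3f_bound {β : ℝ} (hβ : 0 < β) (hC : 0 < C)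
    (hφb : ∀ v, |φ v| ≤ C * (1 + ‖v‖ ^ 2)) (q : (R3 × R3) × S2) :
    |W3f β φ q| ≤ 25 * C ^ 2 * (PhiB β q.1.1 * PhiB β q.1.2) := by
  obtain ⟨⟨v, w⟩, n⟩ := q
  have hMv := (Mb_pos hβ v).le
  have hMw := (Mb_pos hβ w).le
  have hk := collKer_nonneg v w n
  unfold W3f
  simp only
  rw [abs_mul, abs_mul, abs_of_nonneg (by positivity : 0 ≤ Mb β v * Mb β w * collKer v w n)]
  have hd : |φ (vPost v w n) - φ v| ≤ 5 * C * ((1 + ‖v‖) ^ 2 * (1 + ‖w‖) ^ 2) := by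
    rw [abs_sub_comm]
    exact abs_phi_diff_le hC hφb v w n
  have e1 : |φ (vPost v w n) - φ v| * |φ (vPost v w n)|
      ≤ (5 * C * ((1 + ‖v‖) ^ 2 * (1 + ‖w‖) ^ 2))
        * (4 * C * ((1 + ‖v‖) ^ 2 * (1 + ‖w‖) ^ 2)) :=
    mul_le_mul hd (abs_phi_post_le hC hφb v w n) (abs_nonneg _) (by positivity)
  have e2 : Mb β v * Mb β w * collKer v w n
      ≤ Mb β v * Mb β w * ((1 + ‖v‖) * (1 + ‖w‖)) :=
    mul_le_mul_of_nonneg_left (collKer_le v w n) (by positivity)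
  calc |φ (vPost v w n) - φ v| * |φ (vPost v w n)| * (Mb β v * Mb β w * collKer v w n)
      ≤ (5 * C * ((1 + ‖v‖) ^ 2 * (1 + ‖w‖) ^ 2))
          * (4 * C * ((1 + ‖v‖) ^ 2 * (1 + ‖w‖) ^ 2))
          * (Mb β v * Mb β w * ((1 + ‖v‖) * (1 + ‖w‖))) :=
        mul_le_mul e1 e2 (by positivity) (by positivity)
    _ = 20 * C ^ 2 * (PhiB β v * PhiB β w) := by unfold PhiB; ring
    _ ≤ 25 * C ^ 2 * (PhiB β v * PhiB β w) := by
        have := mul_nonneg (PhiB_nonneg hβ v) (PhiB_nonneg hβ w)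
        nlinarith [sq_nonneg C]

lemma W2f_bound {β : ℝ} (hβ : 0 < β) (hC : 0 < C)
    (hφb : ∀ v, |φ v| ≤ C * (1 + ‖v‖ ^ 2)) (q : (R3 × R3) × S2) :
    |W2f β φ q| ≤ 25 * C ^ 2 * (PhiB β q.1.1 * PhiB β q.1.2) := by
  obtain ⟨⟨v, w⟩, n⟩ := q
  have hMv := (Mb_pos hβ v).le
  have hMw := (Mb_pos hβ w).le
  have hk := collKer_nonneg w v n
  unfold W2f
  simp only
  rw [abs_mul, abs_mul, abs_of_nonneg (by positivity : 0 ≤ Mb β v * Mb β w * collKer w v n)]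
  have hd : |φ (vPost v w n) - φ v| ≤ 5 * C * ((1 + ‖v‖) ^ 2 * (1 + ‖w‖) ^ 2) := by
    rw [abs_sub_comm]
    exact abs_phi_diff_le hC hφb v w n
  have e1 : |φ (vPost v w n) - φ v| * |φ (vPost v w n)|
      ≤ (5 * C * ((1 + ‖v‖) ^ 2 * (1 + ‖w‖) ^ 2))
        * (4 * C * ((1 + ‖v‖) ^ 2 * (1 + ‖w‖) ^ 2)) :=
    mul_le_mul hd (abs_phi_post_le hC hφb v w n) (abs_nonneg _) (by positivity)
  have hkle : collKer w v n ≤ (1 + ‖v‖) * (1 + ‖w‖) := by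
    rw [mul_comm]
    exact collKer_le w v n
  have e2 : Mb β v * Mb β w * collKer w v n
      ≤ Mb β v * Mb β w * ((1 + ‖v‖) * (1 + ‖w‖)) :=
    mul_le_mul_of_nonneg_left hkle (by positivity)
  calc |φ (vPost v w n) - φ v| * |φ (vPost v w n)| * (Mb β v * Mb β w * collKer w v n)
      ≤ (5 * C * ((1 + ‖v‖) ^ 2 * (1 + ‖w‖) ^ 2))
          * (4 * C * ((1 + ‖v‖) ^ 2 * (1 + ‖w‖) ^ 2))
          * (Mb β v * Mb β w * ((1 + ‖v‖) * (1 + ‖w‖))) :=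
        mul_le_mul e1 e2 (by positivity) (by positivity)
    _ = 20 * C ^ 2 * (PhiB β v * PhiB β w) := by unfold PhiB; ring
    _ ≤ 25 * C ^ 2 * (PhiB β v * PhiB β w) := by
        have := mul_nonneg (PhiB_nonneg hβ v) (PhiB_nonneg hβ w)
        nlinarith [sq_nonneg C]

lemma Jf_bound {β : ℝ} (hβ : 0 < β) (hC : 0 < C)
    (hφb : ∀ v, |φ v| ≤ C * (1 + ‖v‖ ^ 2)) (q : (R3 × R3) × S2) :
    |Jf β φ q| ≤ 25 * C ^ 2 * (PhiB β q.1.1 * PhiB β q.1.2) := by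
  obtain ⟨⟨v, w⟩, n⟩ := q
  have hMv := (Mb_pos hβ v).le
  have hMw := (Mb_pos hβ w).le
  have hk := collKer_nonneg v w n
  unfold Jf
  simp only
  rw [abs_mul, abs_of_nonneg (by positivity : 0 ≤ Mb β v * Mb β w * collKer v w n),
    abs_of_nonneg (sq_nonneg _)]
  have hd := abs_phi_diff_le hC hφb v w n
  have e1 : (φ v - φ (vPost v w n)) ^ 2
      ≤ (5 * C * ((1 + ‖v‖) ^ 2 * (1 + ‖w‖) ^ 2)) ^ 2 := by
    rw [← sq_abs]
    exact pow_le_pow_left₀ (abs_nonneg _) hd 2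
  have e2 : Mb β v * Mb β w * collKer v w n
      ≤ Mb β v * Mb β w * ((1 + ‖v‖) * (1 + ‖w‖)) :=
    mul_le_mul_of_nonneg_left (collKer_le v w n) (by positivity)
  calc (φ v - φ (vPost v w n)) ^ 2 * (Mb β v * Mb β w * collKer v w n)
      ≤ (5 * C * ((1 + ‖v‖) ^ 2 * (1 + ‖w‖) ^ 2)) ^ 2
          * (Mb β v * Mb β w * ((1 + ‖v‖) * (1 + ‖w‖))) :=
        mul_le_mul e1 e2 (by positivity) (by positivity)
    _ = 25 * C ^ 2 * (PhiB β v * PhiB β w) := by unfold PhiB; ring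

end MoreBounds

section Cont

variable {β : ℝ} {φ : R3 → ℝ}

lemma phiv_cont (hφc : Continuous φ) :
    Continuous (fun q : (R3 × R3) × S2 => φ q.1.1) := hφc.comp continuous_fst.fst

lemma phip_cont (hφc : Continuous φ) :
    Continuous (fun q : (R3 × R3) × S2 => φ (vPost q.1.1 q.1.2 q.2)) :=
  hφc.comp vPost_continuous

lemma Wf_continuous (hφc : Continuous φ) : Continuous (Wf β φ) :=
  (((phiv_cont hφc).sub (phip_cont hφc)).mul (phiv_cont hφc)).mul
    ((MbMb_continuous β).mul collKer_continuous)

lemma W2f_continuous (hφc : Continuous φ) : Continuous (W2f β φ) :=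
  (((phip_cont hφc).sub (phiv_cont hφc)).mul (phip_cont hφc)).mul
    ((MbMb_continuous β).mul collKer_continuous')

lemma W3f_continuous (hφc : Continuous φ) : Continuous (W3f β φ) :=
  (((phip_cont hφc).sub (phiv_cont hφc)).mul (phip_cont hφc)).mul
    ((MbMb_continuous β).mul collKer_continuous)

lemma Jf_continuous (hφc : Continuous φ) : Continuous (Jf β φ) :=
  (((phiv_cont hφc).sub (phip_cont hφc)).pow 2).mul
    ((MbMb_continuous β).mul collKer_continuous)

end Cont

noncomputable def negEquiv : S2 ≃ᵐ S2 where
  toEquiv := Function.Involutive.toPerm _ (neg_neg : Function.Involutive (fun n : S2 => -n))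
  measurable_toFun := sph_neg_continuous.measurable
  measurable_invFun := sph_neg_continuous.measurable

lemma Jf_eq_zero {β γ : ℝ} (hβ : 0 < β) (hγ : 0 < γ) {φ : R3 → ℝ} (hφc : Continuous φ)
    {C : ℝ} (hC : 0 < C) (hφb : ∀ v, |φ v| ≤ C * (1 + ‖v‖ ^ 2))
    (hL : ∀ v, Lb β γ φ v = 0) : ∀ q, Jf β φ q = 0 := by
  have iW : Integrable (Wf β φ) mMeas :=
    integrable_dom hβ (Wf_continuous hφc) (Wf_bound hβ hC hφb)
  have iW2 : Integrable (W2f β φ) mMeas :=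
    integrable_dom hβ (W2f_continuous hφc) (W2f_bound hβ hC hφb)
  have iW3 : Integrable (W3f β φ) mMeas :=
    integrable_dom hβ (W3f_continuous hφc) (W3f_bound hβ hC hφb)
  have iJ : Integrable (Jf β φ) mMeas :=
    integrable_dom hβ (Jf_continuous hφc) (Jf_bound hβ hC hφb)
  -- Step 1 : ∫ Wf = 0
  have hFdef : Wf β φ = fun q =>
      (fun p : R3 × (R3 × S2) => (φ p.1 * Mb β p.1) * LbInt β φ p.1 p.2)
        (MeasurableEquiv.prodAssoc q) := by
    funext q
    unfold Wf LbInt MeasurableEquiv.prodAssoc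
    simp only [Equiv.prodAssoc, MeasurableEquiv.coe_mk, Equiv.coe_fn_mk]
    ring
  have hiF : Integrable (fun p : R3 × (R3 × S2) => (φ p.1 * Mb β p.1) * LbInt β φ p.1 p.2)
      ((volume : Measure R3).prod prodMeas) := by
    apply integrable_assoc
    rw [← hFdef]
    exact iW
  have hWzero : ∫ q, Wf β φ q ∂mMeas = 0 := by
    rw [hFdef, ← integral_assoc, integral_prod _ hiF]
    have hinner : ∀ v : R3, ∫ p, (φ v * Mb β v) * LbInt β φ v p ∂prodMeas = 0 := by
      intro v
      rw [MeasureTheory.integral_const_mul]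
      have h := hL v
      unfold Lb at h
      rcases mul_eq_zero.1 h with h' | h'
      · exact absurd h' hγ.ne'
      · rw [h', mul_zero]
    simp only [hinner, integral_zero]
  -- Step 2 : ∫ Wf = ∫ W2f
  have hW2 : ∫ q, Wf β φ q ∂mMeas = ∫ q, W2f β φ q ∂mMeas := by
    have h2 : ∀ n : S2, (∫ p, Wf β φ (p, n) ∂((volume : Measure R3).prod volume))
        = ∫ p, W2f β φ (p, n) ∂((volume : Measure R3).prod volume) := by
      intro n
      have mp : MeasurePreserving (⇑(TcolEquiv n)) ((volume : Measure R3).prod volume)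
          ((volume : Measure R3).prod volume) := Tcol_measurePreserving n
      calc (∫ p, Wf β φ (p, n) ∂((volume : Measure R3).prod volume))
          = ∫ p, Wf β φ (TcolEquiv n p, n) ∂((volume : Measure R3).prod volume) :=
            (mp.integral_comp' (fun p => Wf β φ (p, n))).symm
        _ = ∫ p, W2f β φ (p, n) ∂((volume : Measure R3).prod volume) := by
            congr 1
            funext p
            exact Wf_T φ n p
    calc ∫ q, Wf β φ q ∂mMeas
        = ∫ n, ∫ p, Wf β φ (p, n) ∂((volume : Measure R3).prod volume) ∂sphMeasure :=
          integral_prod_symm _ iW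
      _ = ∫ n, ∫ p, W2f β φ (p, n) ∂((volume : Measure R3).prod volume) ∂sphMeasure :=
          integral_congr_ae (Filter.Eventually.of_forall h2)
      _ = ∫ q, W2f β φ q ∂mMeas := (integral_prod_symm _ iW2).symm
  -- Step 3 : ∫ W2f = ∫ W3f
  have hW3 : ∫ q, W2f β φ q ∂mMeas = ∫ q, W3f β φ q ∂mMeas := by
    have h3 : ∀ p : R3 × R3, (∫ n, W2f β φ (p, n) ∂sphMeasure)
        = ∫ n, W3f β φ (p, n) ∂sphMeasure := by
      intro p
      have mp : MeasurePreserving (⇑negEquiv) sphMeasure sphMeasure :=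
        sph_neg_measurePreserving
      calc (∫ n, W2f β φ (p, n) ∂sphMeasure)
          = ∫ n, W2f β φ (p, negEquiv n) ∂sphMeasure :=
            (mp.integral_comp' (fun n => W2f β φ (p, n))).symm
        _ = ∫ n, W3f β φ (p, n) ∂sphMeasure := by
            congr 1
            funext n
            exact W2f_neg φ n p
    calc ∫ q, W2f β φ q ∂mMeas
        = ∫ p, ∫ n, W2f β φ (p, n) ∂sphMeasure ∂((volume : Measure R3).prod volume) :=
          integral_prod _ iW2
      _ = ∫ p, ∫ n, W3f β φ (p, n) ∂sphMeasure ∂((volume : Measure R3).prod volume) :=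
          integral_congr_ae (Filter.Eventually.of_forall h3)
      _ = ∫ q, W3f β φ q ∂mMeas := (integral_prod _ iW3).symm
  -- Step 4 : ∫ Jf = 0
  have hJint : ∫ q, Jf β φ q ∂mMeas = 0 := by
    have h4 : ∫ q, Jf β φ q ∂mMeas = ∫ q, (Wf β φ q + W3f β φ q) ∂mMeas := by
      congr 1
      funext q
      exact (Wf_add_W3f φ q).symm
    rw [h4, integral_add iW iW3, ← hW3, ← hW2, hWzero]
    ring
  -- Step 5 : Jf ≡ 0
  have hnn : (0 : (R3 × R3) × S2 → ℝ) ≤ Jf β φ := by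
    intro q
    unfold Jf
    exact mul_nonneg (sq_nonneg _) (mul_nonneg (mul_nonneg (Mb_pos hβ _).le (Mb_pos hβ _).le)
      (collKer_nonneg _ _ _))
  have hae : Jf β φ =ᵐ[mMeas] 0 := (integral_eq_zero_iff_of_nonneg hnn iJ).1 hJint
  haveI : ((volume : Measure R3).prod (volume : Measure R3)).IsOpenPosMeasure :=
    Measure.prod.instIsOpenPosMeasure
  haveI : mMeas.IsOpenPosMeasure := Measure.prod.instIsOpenPosMeasure
  have hfun : Jf β φ = (fun _ => (0:ℝ)) :=
    (Continuous.ae_eq_iff_eq mMeas (Jf_continuous hφc) continuous_const).1 hae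
  intro q
  exact congrFun hfun q

lemma phi_eq_of_pos {β : ℝ} (hβ : 0 < β) {φ : R3 → ℝ} (hJ0 : ∀ q, Jf β φ q = 0)
    (v w : R3) (n : S2) (hq : 0 < dotp (v - w) (n : R3)) : φ (vPost v w n) = φ v := by
  have h := hJ0 ((v, w), n)
  unfold Jf at h
  simp only at h
  have hck : collKer v w n = dotp (v - w) (n : R3) := max_eq_left hq.le
  have hpos : 0 < Mb β v * Mb β w * collKer v w n := by
    rw [hck]
    exact mul_pos (mul_pos (Mb_pos hβ v) (Mb_pos hβ w)) hq
  rcases mul_eq_zero.1 h with h' | h'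
  · have := pow_eq_zero_iff (n := 2) (by norm_num) |>.1 h'
    linarith [sub_eq_zero.1 this]
  · exact absurd h' hpos.ne'

lemma phi_const {β : ℝ} (hβ : 0 < β) {φ : R3 → ℝ} (hJ0 : ∀ q, Jf β φ q = 0) (u : R3) :
    φ u = φ 0 := by
  by_cases hu : u = (0 : R3)
  · rw [hu]
  have hnu : 0 < ‖u‖ := norm_pos_iff.2 hu
  set d : R3 := (0 : R3) - u with hd
  have hnd : ‖d‖ = ‖u‖ := by rw [hd, zero_sub, norm_neg]
  have hnd0 : 0 < ‖d‖ := by rwa [hnd]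
  have hmem : (‖d‖⁻¹ • d) ∈ Metric.sphere (0 : R3) 1 := by
    rw [mem_sphere_zero_iff_norm, norm_smul, norm_inv, norm_norm, inv_mul_cancel₀ hnd0.ne']
  set n : S2 := ⟨‖d‖⁻¹ • d, hmem⟩ with hn
  have hdot : dotp d (n : R3) = ‖d‖ := by
    rw [hn]
    show dotp d (‖d‖⁻¹ • d) = ‖d‖
    unfold dotp
    rw [real_inner_smul_right, real_inner_self_eq_norm_sq]
    field_simp
  have hvp : vPost 0 u n = u := by
    unfold vPost
    rw [← hd, hdot, hn]
    show (0 : R3) - ‖d‖ • ‖d‖⁻¹ • d = u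
    rw [smul_smul, mul_inv_cancel₀ hnd0.ne', one_smul, hd]
    abel
  have := phi_eq_of_pos hβ hJ0 0 u n (by rw [← hd, hdot]; exact hnd0)
  rw [hvp] at this
  exact this

/-- The kernel of the linear Boltzmann operator `L_β` consists exactly of the constant functions:
for continuous `φ` with `|φ(v)| ≤ C (1 + |v|²)`, one has `L_β φ ≡ 0` iff `φ` is constant. -/
theorem linearBoltzmann_kernel_eq_constants (β γ : ℝ) (hβ : 0 < β) (hγ : 0 < γ)
    (φ : R3 → ℝ) (hφc : Continuous φ)
    (hφb : ∃ C : ℝ, 0 < C ∧ ∀ v, |φ v| ≤ C * (1 + ‖v‖ ^ 2)) :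
    (∀ v, Lb β γ φ v = 0) ↔ (∃ c : ℝ, ∀ v, φ v = c) := by
  constructor
  · intro hL
    obtain ⟨C, hC, hb⟩ := hφb
    exact ⟨φ 0, phi_const hβ (Jf_eq_zero hβ hγ hφc hC hb hL)⟩
  · rintro ⟨c, hc⟩ v
    unfold Lb
    have h0 : LbInt β φ v = fun _ => (0 : ℝ) := by
      funext p
      unfold LbInt
      rw [hc v, hc (vPost v p.1 p.2)]
      ring
    rw [h0, integral_zero, mul_zero]
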